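/- The van der Waerden number satisfies w(k;c) ≥ c^(k−3)·(k−1)/k² for all k ≥ 2 and c ≥ 2. -/

import Mathlib

/-- A coloring χ contains a monochromatic k-term arithmetic progression
within {1,...,n}. -/
def hasMonoAP (c k n : ℕ) (χ : ℕ → Fin c) : Prop :=
  ∃ a d : ℕ, 1 ≤ a ∧ 1 ≤ d ∧ a + (k - 1) * d ≤ n ∧ ∀ i < k, χ (a + i * d) = χ a

/-- The van der Waerden number w(k;c): the least n such that every c-coloring of
{1,...,n} contains a monochromatic k-term arithmetic progression. -/
noncomputable def vdW (k c : ℕ) : ℕ := sInf {n | ∀ χ : ℕ → Fin c, hasMonoAP c k n χ}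

open Finset

namespace VdWAux

variable {n c : ℕ}

/-- `P` depends only on coordinates in `S`. -/
def DepOn (P : (Fin n → Fin c) → Prop) (S : Finset (Fin n)) : Prop :=
  ∀ g h : Fin n → Fin c, (∀ i ∈ S, g i = h i) → (P g ↔ P h)

lemma DepOn.mono {P : (Fin n → Fin c) → Prop} {S S' : Finset (Fin n)}
    (h : DepOn P S) (hss : S ⊆ S') : DepOn P S' :=
  fun g g' hag => h g g' (fun i hi => hag i (hss hi))

lemma card_mul_of_indep {P R : (Fin n → Fin c) → Prop}
    [DecidablePred P] [DecidablePred R] {S : Finset (Fin n)}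
    (hP : DepOn P S) (hR : DepOn R Sᶜ) :
    (univ.filter fun g => P g ∧ R g).card * c ^ n
      = (univ.filter P).card * (univ.filter R).card := by
  classical
  have key : ((univ.filter fun g => P g ∧ R g) ×ˢ (univ : Finset (Fin n → Fin c))).card
      = ((univ.filter P) ×ˢ (univ.filter R)).card := by
    apply card_nbij' (fun gh => (S.piecewise gh.1 gh.2, S.piecewise gh.2 gh.1))
      (fun uv => (S.piecewise uv.1 uv.2, S.piecewise uv.2 uv.1))
    · rintro ⟨g, h⟩ hgh
      simp only [mem_coe, mem_product, mem_filter, mem_univ, true_and] at hgh ⊢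
      obtain ⟨⟨hPg, hRg⟩, -⟩ := hgh
      constructor
      · exact (hP _ g (fun i hi => S.piecewise_eq_of_mem _ _ hi)).mpr hPg
      · refine (hR _ g (fun i hi => ?_)).mpr hRg
        exact S.piecewise_eq_of_notMem _ _ (by simpa using hi)
    · rintro ⟨u, v⟩ huv
      simp only [mem_coe, mem_product, mem_filter, mem_univ, true_and] at huv ⊢
      obtain ⟨hPu, hRv⟩ := huv
      refine ⟨⟨?_, ?_⟩, trivial⟩
      · exact (hP _ u (fun i hi => S.piecewise_eq_of_mem _ _ hi)).mpr hPu
      · refine (hR _ v (fun i hi => ?_)).mpr hRv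
        exact S.piecewise_eq_of_notMem _ _ (by simpa using hi)
    · rintro ⟨g, h⟩ -
      ext x
      · by_cases hx : x ∈ S <;> simp [Finset.piecewise, hx]
      · by_cases hx : x ∈ S <;> simp [Finset.piecewise, hx]
    · rintro ⟨u, v⟩ -
      ext x
      · by_cases hx : x ∈ S <;> simp [Finset.piecewise, hx]
      · by_cases hx : x ∈ S <;> simp [Finset.piecewise, hx]
  simpa [Finset.card_product, Fintype.card_fun] using key

lemma card_constOn (S : Finset (Fin n)) {x₀ : Fin n} (hx : x₀ ∈ S) :
    (univ.filter fun g : Fin n → Fin c => ∀ j ∈ S, ∀ j' ∈ S, g j = g j').card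
      * c ^ (S.card - 1) = c ^ n := by
  classical
  have key : (univ : Finset (Fin n → Fin c)).card
      = ((univ.filter fun g : Fin n → Fin c => ∀ j ∈ S, ∀ j' ∈ S, g j = g j')
          ×ˢ (univ : Finset (↥(S.erase x₀) → Fin c))).card := by
    refine card_nbij'
      (fun g : Fin n → Fin c =>
        (S.piecewise (fun _ => g x₀) g, fun j : ↥(S.erase x₀) => g j.1))
      (fun uv : (Fin n → Fin c) × (↥(S.erase x₀) → Fin c) =>
        fun x => if h : x ∈ S.erase x₀ then uv.2 ⟨x, h⟩ else uv.1 x) ?_ ?_ ?_ ?_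
    · rintro g -
      simp only [mem_coe, mem_product, mem_filter, mem_univ, true_and, and_true]
      intro j hj j' hj'
      rw [S.piecewise_eq_of_mem _ _ hj, S.piecewise_eq_of_mem _ _ hj']
    · rintro uv -
      exact mem_univ _
    · rintro g -
      funext x
      by_cases h : x ∈ S.erase x₀
      · simp [h]
      · simp only [h, dite_false]
        by_cases hxS : x ∈ S
        · have hxx : x = x₀ := by
            by_contra hne
            exact h (Finset.mem_erase.mpr ⟨hne, hxS⟩)
          subst hxx
          exact S.piecewise_eq_of_mem _ _ hxS
        · exact S.piecewise_eq_of_notMem _ _ hxS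
    · rintro ⟨u, v⟩ huv
      simp only [mem_coe, mem_product, mem_filter, mem_univ, true_and, and_true] at huv
      refine Prod.ext ?_ ?_
      · funext x
        dsimp only
        by_cases hxS : x ∈ S
        · rw [S.piecewise_eq_of_mem _ _ hxS]
          have hx₀ : x₀ ∉ S.erase x₀ := Finset.notMem_erase _ _
          simp only [hx₀, dite_false]
          exact huv x₀ hx x hxS
        · rw [S.piecewise_eq_of_notMem _ _ hxS]
          have hne : x ∉ S.erase x₀ := fun hh => hxS (Finset.mem_of_mem_erase hh)
          simp [hne]
      · funext j
        dsimp only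
        simp [j.2]
  have hcards : ((univ.filter fun g : Fin n → Fin c => ∀ j ∈ S, ∀ j' ∈ S, g j = g j')
      ×ˢ (univ : Finset (↥(S.erase x₀) → Fin c))).card
      = (univ.filter fun g : Fin n → Fin c => ∀ j ∈ S, ∀ j' ∈ S, g j = g j').card
        * c ^ (S.card - 1) := by
    rw [Finset.card_product, Finset.card_univ, Fintype.card_fun, Fintype.card_fin,
      Fintype.card_coe, Finset.card_erase_of_mem hx]
  rw [← hcards, ← key, Finset.card_univ, Fintype.card_fun, Fintype.card_fin, Fintype.card_fin]
variable (n k c : ℕ)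

/-- Support of the AP `(a,d)`: positions (0-indexed) of its terms. -/
def supp (t : ℕ × ℕ) : Finset (Fin n) :=
  univ.filter (fun j => ∃ i < k, (j : ℕ) + 1 = t.1 + i * t.2)

/-- The finite set of k-term APs inside {1,…,n}. -/
def APs : Finset (ℕ × ℕ) :=
  (Finset.Icc 1 n ×ˢ Finset.Icc 1 n).filter
    (fun t => 1 ≤ t.1 ∧ 1 ≤ t.2 ∧ t.1 + (k - 1) * t.2 ≤ n)

/-- `g` is monochromatic on the AP `t`. -/
def MonoOn (t : ℕ × ℕ) (g : Fin n → Fin c) : Prop :=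
  ∀ j ∈ supp n k t, ∀ j' ∈ supp n k t, g j = g j'

instance (t : ℕ × ℕ) : DecidablePred (MonoOn n k c t) := fun g =>
  decidable_of_iff (∀ j ∈ supp n k t, ∀ j' ∈ supp n k t, g j = g j') Iff.rfl

variable {n k c}

lemma mem_APs {t : ℕ × ℕ} (hk : 2 ≤ k) :
    t ∈ APs n k ↔ 1 ≤ t.1 ∧ 1 ≤ t.2 ∧ t.1 + (k - 1) * t.2 ≤ n := by
  constructor
  · intro h
    exact (Finset.mem_filter.mp h).2
  · intro ⟨h1, h2, h3⟩
    refine Finset.mem_filter.mpr ⟨Finset.mem_product.mpr ⟨?_, ?_⟩, h1, h2, h3⟩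
    · refine Finset.mem_Icc.mpr ⟨h1, ?_⟩
      have : 1 * t.2 ≤ (k - 1) * t.2 := Nat.mul_le_mul_right _ (by omega)
      omega
    · refine Finset.mem_Icc.mpr ⟨h2, ?_⟩
      have : 1 * t.2 ≤ (k - 1) * t.2 := Nat.mul_le_mul_right _ (by omega)
      omega

lemma card_supp {t : ℕ × ℕ} (hk : 2 ≤ k) (ht : t ∈ APs n k) :
    (supp n k t).card = k := by
  obtain ⟨a, d⟩ := t
  obtain ⟨h1, h2, h3⟩ := (mem_APs hk).mp ht
  simp only at h1 h2 h3
  have key : (Finset.range k).card = (supp n k (a, d)).card := by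
    refine Finset.card_bij'
      (fun m hm => (⟨a + m * d - 1, ?_⟩ : Fin n))
      (fun b hb => ((b : ℕ) + 1 - a) / d) ?_ ?_ ?_ ?_
    · have hm' : m ≤ k - 1 := by
        have := Finset.mem_range.mp hm; omega
      have : m * d ≤ (k - 1) * d := Nat.mul_le_mul_right _ hm'
      omega
    · intro m hm
      refine Finset.mem_filter.mpr ⟨Finset.mem_univ _, ⟨m, Finset.mem_range.mp hm, ?_⟩⟩
      simp only
      omega
    · intro b hb
      obtain ⟨-, i, hik, hib⟩ := Finset.mem_filter.mp hb
      simp only at hib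
      have hbd : ((b : ℕ) + 1 - a) = i * d := by omega
      rw [hbd, Nat.mul_div_cancel _ h2]
      exact Finset.mem_range.mpr hik
    · intro m hm
      simp only
      have hm' : m ≤ k - 1 := by
        have := Finset.mem_range.mp hm; omega
      have hmd : m * d ≤ (k - 1) * d := Nat.mul_le_mul_right _ hm'
      have : (a + m * d - 1 + 1 - a) = m * d := by omega
      rw [this, Nat.mul_div_cancel _ h2]
    · intro b hb
      obtain ⟨-, i, hik, hib⟩ := Finset.mem_filter.mp hb
      simp only at hib
      have hbd : ((b : ℕ) + 1 - a) = i * d := by omega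
      apply Fin.ext
      simp only
      rw [hbd, Nat.mul_div_cancel _ h2]
      omega
  rw [← key, Finset.card_range]


variable (n k c) in
/-- Colorings avoiding all APs in `S`. -/
def Av (S : Finset (ℕ × ℕ)) : Finset (Fin n → Fin c) :=
  univ.filter (fun g => ∀ t ∈ S, ¬ MonoOn n k c t g)

variable (n k c) in
/-- Colorings monochromatic on `t`. -/
def Ev (t : ℕ × ℕ) : Finset (Fin n → Fin c) :=
  univ.filter (fun g : Fin n → Fin c => ∀ j ∈ supp n k t, ∀ j' ∈ supp n k t, g j = g j')

lemma depOn_monoOn (t : ℕ × ℕ) : DepOn (MonoOn n k c t) (supp n k t) := by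
  intro g h hag
  unfold MonoOn
  constructor
  · intro hm j hj j' hj'
    rw [← hag j hj, ← hag j' hj']
    exact hm j hj j' hj'
  · intro hm j hj j' hj'
    rw [hag j hj, hag j' hj']
    exact hm j hj j' hj'

lemma depOn_av (S : Finset (ℕ × ℕ)) (A : Finset (Fin n))
    (hS : ∀ s ∈ S, supp n k s ⊆ A) :
    DepOn (c := c) (fun g => ∀ t ∈ S, ¬ MonoOn n k c t g) A := by
  intro g h hag
  have : ∀ t ∈ S, MonoOn n k c t g ↔ MonoOn n k c t h := fun t ht =>
    depOn_monoOn t g h (fun i hi => hag i (hS t ht hi))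
  constructor
  · intro hm t ht hmono
    exact hm t ht ((this t ht).mpr hmono)
  · intro hm t ht hmono
    exact hm t ht ((this t ht).mp hmono)

lemma card_Ev (hk : 2 ≤ k) {t : ℕ × ℕ} (ht : t ∈ APs n k) :
    (Ev n k c t).card * c ^ (k - 1) = c ^ n := by
  classical
  have hcard : (supp n k t).card = k := card_supp hk ht
  have hne : (supp n k t).Nonempty := Finset.card_pos.mp (by omega)
  obtain ⟨x₀, hx₀⟩ := hne
  have := card_constOn (c := c) (supp n k t) hx₀
  rw [hcard] at this
  exact this

lemma indep_identity (hk : 2 ≤ k) (hc : 2 ≤ c) {t : ℕ × ℕ} (ht : t ∈ APs n k)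
    (S₂ : Finset (ℕ × ℕ)) (hdisj : ∀ s ∈ S₂, Disjoint (supp n k s) (supp n k t)) :
    c ^ (k - 1) * (Av n k c S₂ ∩ Ev n k c t).card = (Av n k c S₂).card := by
  classical
  have hP : DepOn (MonoOn n k c t) (supp n k t) := depOn_monoOn t
  have hR : DepOn (c := c) (fun g => ∀ s ∈ S₂, ¬ MonoOn n k c s g) (supp n k t)ᶜ := by
    refine depOn_av S₂ _ (fun s hs => ?_)
    intro x hx
    exact Finset.mem_compl.mpr (fun hxt => (Finset.disjoint_left.mp (hdisj s hs)) hx hxt)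
  have key := card_mul_of_indep hP hR
  have hsplit : (univ.filter fun g : Fin n → Fin c =>
      MonoOn n k c t g ∧ ∀ s ∈ S₂, ¬ MonoOn n k c s g)
      = Av n k c S₂ ∩ Ev n k c t := by
    ext g
    rw [Finset.mem_inter, Av, Ev, Finset.mem_filter, Finset.mem_filter, Finset.mem_filter]
    simp only [Finset.mem_filter, Finset.mem_inter, Finset.mem_univ, true_and, Av, Ev,
      MonoOn]
    tauto
  have hEv : (univ.filter (MonoOn n k c t)) = Ev n k c t := by
    ext g; simp [Ev, MonoOn]
  have hAv : (univ.filter fun g : Fin n → Fin c => ∀ s ∈ S₂, ¬ MonoOn n k c s g)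
      = Av n k c S₂ := by
    ext g; simp [Av]
  rw [hsplit, hEv, hAv] at key
  -- key : (Av ∩ Ev).card * c ^ n = (Ev).card * (Av).card
  have hEvcard := card_Ev (c := c) hk ht
  have hcn : 0 < c ^ n := by positivity
  have main : (c ^ (k - 1) * (Av n k c S₂ ∩ Ev n k c t).card) * c ^ n
      = (Av n k c S₂).card * c ^ n := by
    calc (c ^ (k - 1) * (Av n k c S₂ ∩ Ev n k c t).card) * c ^ n
        = c ^ (k - 1) * ((Av n k c S₂ ∩ Ev n k c t).card * c ^ n) := by ring
      _ = c ^ (k - 1) * ((Ev n k c t).card * (Av n k c S₂).card) := by rw [key]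
      _ = ((Ev n k c t).card * c ^ (k - 1)) * (Av n k c S₂).card := by ring
      _ = c ^ n * (Av n k c S₂).card := by rw [hEvcard]
      _ = (Av n k c S₂).card * c ^ n := by ring
  exact Nat.eq_of_mul_eq_mul_right hcn main

lemma av_anti {S S' : Finset (ℕ × ℕ)} (h : S' ⊆ S) : Av n k c S ⊆ Av n k c S' := by
  intro g hg
  simp only [Av, Finset.mem_filter, Finset.mem_univ, true_and] at hg ⊢
  exact fun t ht => hg t (h ht)

lemma mem_Ev_iff {t : ℕ × ℕ} {g : Fin n → Fin c} :
    g ∈ Ev n k c t ↔ MonoOn n k c t g := by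
  simp [Ev, MonoOn]

lemma mem_Av_iff {S : Finset (ℕ × ℕ)} {g : Fin n → Fin c} :
    g ∈ Av n k c S ↔ ∀ t ∈ S, ¬ MonoOn n k c t g := by
  simp [Av]

lemma lll_claim (hk : 2 ≤ k) (hc : 2 ≤ c)
    (hD : ∀ t ∈ APs n k,
      4 * ((APs n k).filter (fun s => ¬ Disjoint (supp n k s) (supp n k t))).card
        ≤ c ^ (k - 1)) :
    ∀ m (S : Finset (ℕ × ℕ)), S.card ≤ m → S ⊆ APs n k → ∀ t ∈ APs n k,
      c ^ (k - 1) * (Av n k c S ∩ Ev n k c t).card ≤ 2 * (Av n k c S).card := by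
  intro m
  induction m with
  | zero =>
    intro S hcard hST t ht
    have hS : S = ∅ := Finset.card_eq_zero.mp (Nat.le_zero.mp hcard)
    subst hS
    have hid := indep_identity hk hc ht ∅ (by simp)
    rw [Finset.inter_comm] at hid ⊢
    omega
  | succ m ih =>
    intro S hcard hST t ht
    classical
    by_cases hS₁ : S.filter (fun s => Disjoint (supp n k s) (supp n k t)) = S
    · have hdisj : ∀ s ∈ S, Disjoint (supp n k s) (supp n k t) := by
        intro s hs
        rw [← hS₁] at hs
        exact (Finset.mem_filter.mp hs).2
      have hid := indep_identity hk hc ht S hdisj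
      omega
    · set S₂ := S.filter (fun s => Disjoint (supp n k s) (supp n k t)) with hS₂def
      have hS₂sub : S₂ ⊆ S := Finset.filter_subset _ _
      have hS₂card : S₂.card < S.card :=
        Finset.card_lt_card (Finset.ssubset_iff_subset_ne.mpr ⟨hS₂sub, hS₁⟩)
      have hdisj : ∀ s ∈ S₂, Disjoint (supp n k s) (supp n k t) := by
        intro s hs
        exact (Finset.mem_filter.mp hs).2
      have hid := indep_identity hk hc ht S₂ hdisj
      set Q := c ^ (k - 1) with hQ
      set A := (Av n k c S).card with hA
      set A₂ := (Av n k c S₂).card with hA₂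
      -- every coloring avoiding S₂ either avoids S or is mono on some s ∈ S \ S₂
      have hsubU : Av n k c S₂ ⊆
          Av n k c S ∪ (S \ S₂).biUnion (fun s => Av n k c S₂ ∩ Ev n k c s) := by
        intro g hg
        by_cases hgS : g ∈ Av n k c S
        · exact Finset.mem_union_left _ hgS
        · refine Finset.mem_union_right _ ?_
          rw [mem_Av_iff] at hgS
          push_neg at hgS
          obtain ⟨s, hsS, hmono⟩ := hgS
          have hs₂ : s ∉ S₂ := by
            intro hs₂
            exact (mem_Av_iff.mp hg s hs₂) hmono
          exact Finset.mem_biUnion.mpr ⟨s, Finset.mem_sdiff.mpr ⟨hsS, hs₂⟩,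
            Finset.mem_inter.mpr ⟨hg, mem_Ev_iff.mpr hmono⟩⟩
      have hcard2 : A₂ ≤ A + ∑ s ∈ (S \ S₂), (Av n k c S₂ ∩ Ev n k c s).card := by
        calc A₂ ≤ (Av n k c S ∪ (S \ S₂).biUnion
            (fun s => Av n k c S₂ ∩ Ev n k c s)).card := Finset.card_le_card hsubU
          _ ≤ A + ((S \ S₂).biUnion (fun s => Av n k c S₂ ∩ Ev n k c s)).card :=
            Finset.card_union_le _ _
          _ ≤ A + ∑ s ∈ (S \ S₂), (Av n k c S₂ ∩ Ev n k c s).card :=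
            Nat.add_le_add_left (Finset.card_biUnion_le) _
      have hIH : ∀ s ∈ S \ S₂, Q * (Av n k c S₂ ∩ Ev n k c s).card ≤ 2 * A₂ := by
        intro s hs
        exact ih S₂ (by omega) (fun x hx => hST (hS₂sub hx)) s
          (hST (Finset.mem_sdiff.mp hs).1)
      -- the number of "neighbour" APs is at most Q/4
      have hS₁card : 4 * (S \ S₂).card ≤ Q := by
        have hsubN : S \ S₂ ⊆
            (APs n k).filter (fun s => ¬ Disjoint (supp n k s) (supp n k t)) := by
          intro s hs
          obtain ⟨hsS, hs₂⟩ := Finset.mem_sdiff.mp hs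
          refine Finset.mem_filter.mpr ⟨hST hsS, ?_⟩
          intro hdis
          exact hs₂ (Finset.mem_filter.mpr ⟨hsS, hdis⟩)
        calc 4 * (S \ S₂).card ≤ 4 * ((APs n k).filter
            (fun s => ¬ Disjoint (supp n k s) (supp n k t))).card :=
            Nat.mul_le_mul_left _ (Finset.card_le_card hsubN)
          _ ≤ Q := hD t ht
      have hQpos : 0 < Q := by positivity
      -- conclude A₂ ≤ 2 * A
      have hA₂le : A₂ ≤ 2 * A := by
        have h1 : Q * A₂ ≤ Q * A + ∑ s ∈ (S \ S₂), Q * (Av n k c S₂ ∩ Ev n k c s).card := by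
          rw [← Finset.mul_sum]
          calc Q * A₂ ≤ Q * (A + ∑ s ∈ (S \ S₂), (Av n k c S₂ ∩ Ev n k c s).card) :=
              Nat.mul_le_mul_left _ hcard2
            _ = Q * A + Q * ∑ s ∈ (S \ S₂), (Av n k c S₂ ∩ Ev n k c s).card := by ring
        have h2 : ∑ s ∈ (S \ S₂), Q * (Av n k c S₂ ∩ Ev n k c s).card
            ≤ (S \ S₂).card * (2 * A₂) := by
          calc ∑ s ∈ (S \ S₂), Q * (Av n k c S₂ ∩ Ev n k c s).card
              ≤ ∑ _s ∈ (S \ S₂), 2 * A₂ := Finset.sum_le_sum hIH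
            _ = (S \ S₂).card * (2 * A₂) := by rw [Finset.sum_const, smul_eq_mul]
        have h3 : 4 * ((S \ S₂).card * (2 * A₂)) ≤ Q * (2 * A₂) := by
          have := Nat.mul_le_mul_right (2 * A₂) hS₁card
          calc 4 * ((S \ S₂).card * (2 * A₂)) = 4 * (S \ S₂).card * (2 * A₂) := by ring
            _ ≤ Q * (2 * A₂) := this
        have h4 : Q * (4 * A₂) ≤ Q * (4 * A + 2 * A₂) := by
          calc Q * (4 * A₂) = 4 * (Q * A₂) := by ring
            _ ≤ 4 * (Q * A) + 4 * ((S \ S₂).card * (2 * A₂)) := by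
                have := Nat.mul_le_mul_left 4 h1
                omega
            _ ≤ 4 * (Q * A) + Q * (2 * A₂) := by omega
            _ = Q * (4 * A + 2 * A₂) := by ring
        have h5 : 4 * A₂ ≤ 4 * A + 2 * A₂ := Nat.le_of_mul_le_mul_left h4 hQpos
        omega
      calc Q * (Av n k c S ∩ Ev n k c t).card
          ≤ Q * (Av n k c S₂ ∩ Ev n k c t).card := by
            refine Nat.mul_le_mul_left _ (Finset.card_le_card ?_)
            exact Finset.inter_subset_inter_right (av_anti hS₂sub)
        _ = A₂ := hid
        _ ≤ 2 * A := hA₂le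

lemma lll_pos (hk : 2 ≤ k) (hc : 2 ≤ c) (hQ3 : 3 ≤ c ^ (k - 1))
    (hD : ∀ t ∈ APs n k,
      4 * ((APs n k).filter (fun s => ¬ Disjoint (supp n k s) (supp n k t))).card
        ≤ c ^ (k - 1)) :
    0 < (Av n k c (APs n k)).card := by
  classical
  suffices H : ∀ m (S : Finset (ℕ × ℕ)), S.card ≤ m → S ⊆ APs n k →
      0 < (Av n k c S).card from H _ (APs n k) le_rfl (Finset.Subset.refl _)
  intro m
  induction m with
  | zero =>
    intro S hcard hST
    have hS : S = ∅ := Finset.card_eq_zero.mp (Nat.le_zero.mp hcard)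
    subst hS
    refine Finset.card_pos.mpr ⟨fun _ => ⟨0, by omega⟩, ?_⟩
    rw [mem_Av_iff]
    simp
  | succ m ih =>
    intro S hcard hST
    rcases Finset.eq_empty_or_nonempty S with hS | ⟨t, ht⟩
    · subst hS
      refine Finset.card_pos.mpr ⟨fun _ => ⟨0, by omega⟩, ?_⟩
      rw [mem_Av_iff]
      simp
    · have htAP : t ∈ APs n k := hST ht
      have hS'sub : S.erase t ⊆ APs n k := fun x hx => hST (Finset.mem_of_mem_erase hx)
      have hS'card : (S.erase t).card ≤ m := by
        have := Finset.card_erase_of_mem ht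
        omega
      have hA' : 0 < (Av n k c (S.erase t)).card := ih _ hS'card hS'sub
      have hclaim := lll_claim hk hc hD (S.erase t).card (S.erase t) le_rfl hS'sub t htAP
      have hsplit : (Av n k c (S.erase t) ∩ Ev n k c t).card
          + (Av n k c (S.erase t) \ Ev n k c t).card = (Av n k c (S.erase t)).card :=
        Finset.card_inter_add_card_sdiff _ _
      have hAvS : Av n k c S = Av n k c (S.erase t) \ Ev n k c t := by
        ext g
        rw [Finset.mem_sdiff, mem_Av_iff, mem_Av_iff, mem_Ev_iff]
        constructor
        · intro h
          exact ⟨fun s hs => h s (Finset.mem_of_mem_erase hs), h t ht⟩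
        · intro ⟨h1, h2⟩ s hs
          by_cases hst : s = t
          · subst hst; exact h2
          · exact h1 s (Finset.mem_erase.mpr ⟨hst, hs⟩)
      have hxlt : (Av n k c (S.erase t) ∩ Ev n k c t).card
          < (Av n k c (S.erase t)).card := by
        have h3x : 3 * (Av n k c (S.erase t) ∩ Ev n k c t).card
            ≤ c ^ (k - 1) * (Av n k c (S.erase t) ∩ Ev n k c t).card :=
          Nat.mul_le_mul_right _ hQ3
        omega
      rw [hAvS]
      omega

lemma per_point (hk : 2 ≤ k) (j : Fin n) :
    ((APs n k).filter (fun s => j ∈ supp n k s)).card ≤ k * ((n - 1) / (k - 1)) := by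
  classical
  have hle : ((APs n k).filter (fun s => j ∈ supp n k s)).card
      ≤ (Finset.range k ×ˢ Finset.Icc 1 ((n - 1) / (k - 1))).card := by
    refine Finset.card_le_card_of_injOn
      (fun s => (((j : ℕ) + 1 - s.1) / s.2, s.2)) ?_ ?_
    · intro s hs
      dsimp only
      obtain ⟨hsAP, hjs⟩ := Finset.mem_filter.mp hs
      obtain ⟨h1, h2, h3⟩ := (mem_APs hk).mp hsAP
      obtain ⟨-, i, hik, hij⟩ := Finset.mem_filter.mp hjs
      have hia : (j : ℕ) + 1 - s.1 = i * s.2 := by omega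
      refine Finset.mem_product.mpr ⟨?_, ?_⟩
      · dsimp only
        rw [hia, Nat.mul_div_cancel _ h2]
        exact Finset.mem_range.mpr hik
      · dsimp only
        refine Finset.mem_Icc.mpr ⟨h2, ?_⟩
        rw [Nat.le_div_iff_mul_le (by omega : 0 < k - 1)]
        have hcm : s.2 * (k - 1) = (k - 1) * s.2 := Nat.mul_comm _ _
        have : 1 * s.2 ≤ (k - 1) * s.2 := Nat.mul_le_mul_right _ (by omega)
        omega
    · intro s hs s' hs' heq
      dsimp only at heq
      simp only [Finset.coe_filter, Set.mem_setOf_eq] at hs hs'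
      obtain ⟨hsAP, hjs⟩ := hs
      obtain ⟨hsAP', hjs'⟩ := hs'
      obtain ⟨h1, h2, h3⟩ := (mem_APs hk).mp hsAP
      obtain ⟨h1', h2', h3'⟩ := (mem_APs hk).mp hsAP'
      obtain ⟨-, i, hik, hij⟩ := Finset.mem_filter.mp hjs
      obtain ⟨-, i', hik', hij'⟩ := Finset.mem_filter.mp hjs'
      have hd : s.2 = s'.2 := (Prod.ext_iff.mp heq).2
      have hfst : ((j : ℕ) + 1 - s.1) / s.2 = ((j : ℕ) + 1 - s'.1) / s'.2 :=
        (Prod.ext_iff.mp heq).1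
      have hia : (j : ℕ) + 1 - s.1 = i * s.2 := by omega
      have hia' : (j : ℕ) + 1 - s'.1 = i' * s'.2 := by omega
      rw [hia, hia', Nat.mul_div_cancel _ h2, Nat.mul_div_cancel _ h2'] at hfst
      subst hfst
      rw [← hd] at hij'
      have : s.1 = s'.1 := by omega
      exact Prod.ext this hd
  calc ((APs n k).filter (fun s => j ∈ supp n k s)).card
      ≤ (Finset.range k ×ˢ Finset.Icc 1 ((n - 1) / (k - 1))).card := hle
    _ = k * ((n - 1) / (k - 1)) := by
        rw [Finset.card_product, Finset.card_range, Nat.card_Icc]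
        simp

lemma count_nbrs (hk : 2 ≤ k) {t : ℕ × ℕ} (ht : t ∈ APs n k) :
    ((APs n k).filter (fun s => ¬ Disjoint (supp n k s) (supp n k t))).card
      ≤ k * (k * ((n - 1) / (k - 1))) := by
  classical
  have hsub : (APs n k).filter (fun s => ¬ Disjoint (supp n k s) (supp n k t))
      ⊆ (supp n k t).biUnion (fun j => (APs n k).filter (fun s => j ∈ supp n k s)) := by
    intro s hs
    obtain ⟨hsAP, hnd⟩ := Finset.mem_filter.mp hs
    obtain ⟨j, hjs, hjt⟩ := Finset.not_disjoint_iff.mp hnd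
    exact Finset.mem_biUnion.mpr ⟨j, hjt, Finset.mem_filter.mpr ⟨hsAP, hjs⟩⟩
  calc ((APs n k).filter (fun s => ¬ Disjoint (supp n k s) (supp n k t))).card
      ≤ ((supp n k t).biUnion
          (fun j => (APs n k).filter (fun s => j ∈ supp n k s))).card :=
        Finset.card_le_card hsub
    _ ≤ ∑ j ∈ supp n k t, ((APs n k).filter (fun s => j ∈ supp n k s)).card :=
        Finset.card_biUnion_le
    _ ≤ ∑ _j ∈ supp n k t, k * ((n - 1) / (k - 1)) :=
        Finset.sum_le_sum (fun j _ => per_point hk j)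
    _ = k * (k * ((n - 1) / (k - 1))) := by
        rw [Finset.sum_const, smul_eq_mul, card_supp hk ht]

lemma exists_avoider (hk : 2 ≤ k) (hc : 2 ≤ c) (hQ3 : 3 ≤ c ^ (k - 1))
    (hcond : 4 * (k * (k * ((n - 1) / (k - 1)))) ≤ c ^ (k - 1)) :
    ∃ g : Fin n → Fin c, ∀ t ∈ APs n k, ¬ MonoOn n k c t g := by
  have hD : ∀ t ∈ APs n k,
      4 * ((APs n k).filter (fun s => ¬ Disjoint (supp n k s) (supp n k t))).card
        ≤ c ^ (k - 1) := fun t ht =>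
    le_trans (Nat.mul_le_mul_left 4 (count_nbrs hk ht)) hcond
  obtain ⟨g, hg⟩ := Finset.card_pos.mp (lll_pos hk hc hQ3 hD)
  exact ⟨g, mem_Av_iff.mp hg⟩


/-- Van der Waerden's theorem (finiteness), from Hales–Jewett. -/
lemma exists_vdW_bound (k c : ℕ) (hk : 2 ≤ k) (hc : 2 ≤ c) :
    ∃ n, ∀ χ : ℕ → Fin c, hasMonoAP c k n χ := by
  classical
  obtain ⟨ι, _inst, hι⟩ :=
    Combinatorics.Line.exists_mono_in_high_dimension (Fin k) (Fin c)
  refine ⟨1 + (k - 1) * Fintype.card ι, fun χ => ?_⟩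
  obtain ⟨l, c₀, hl⟩ := hι (fun v => χ (1 + ∑ i, ((v i : ℕ))))
  set u : Finset ι := Finset.univ.filter (fun i => l.idxFun i = none) with hu
  obtain ⟨x0, hx0val⟩ : ∃ x : Fin k, (x : ℕ) = 0 := ⟨⟨0, by omega⟩, rfl⟩
  have hconst : ∀ x : Fin k, ∀ i ∈ uᶜ, ((l x i : Fin k) : ℕ) = ((l x0 i : Fin k) : ℕ) := by
    intro x i hi
    have : ¬ (l.idxFun i = none) := by
      intro h
      exact (Finset.mem_compl.mp hi) (Finset.mem_filter.mpr ⟨Finset.mem_univ _, h⟩)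
    obtain ⟨a, ha⟩ := Option.ne_none_iff_exists'.mp this
    rw [Combinatorics.Line.coe_apply, Combinatorics.Line.coe_apply, ha]
    rfl
  have hsum : ∀ x : Fin k, (∑ i, ((l x i : Fin k) : ℕ))
      = (x : ℕ) * u.card + ∑ i ∈ uᶜ, ((l x0 i : Fin k) : ℕ) := by
    intro x
    rw [← Finset.sum_add_sum_compl u]
    congr 1
    · rw [Finset.sum_congr rfl (fun i hi => ?_), Finset.sum_const, smul_eq_mul, mul_comm]
      rw [Combinatorics.Line.coe_apply, (Finset.mem_filter.mp hi).2]
      rfl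
    · exact Finset.sum_congr rfl (fun i hi => hconst x i hi)
  set b : ℕ := ∑ i ∈ uᶜ, ((l x0 i : Fin k) : ℕ) with hb
  have hm : 1 ≤ u.card := by
    obtain ⟨i0, hi0⟩ := l.proper
    exact Finset.card_pos.mpr ⟨i0, Finset.mem_filter.mpr ⟨Finset.mem_univ _, hi0⟩⟩
  have hbb : b + (k - 1) * u.card ≤ (k - 1) * Fintype.card ι := by
    have h1 : b ≤ (k - 1) * uᶜ.card := by
      calc b ≤ ∑ _i ∈ uᶜ, (k - 1) :=
          Finset.sum_le_sum (fun i _ => by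
            have := (l x0 i).isLt
            omega)
        _ = uᶜ.card * (k - 1) := by rw [Finset.sum_const, smul_eq_mul]
        _ = (k - 1) * uᶜ.card := mul_comm _ _
    have h2 : uᶜ.card + u.card = Fintype.card ι := by
      rw [Finset.card_compl]
      have := Finset.card_le_univ u
      omega
    calc b + (k - 1) * u.card ≤ (k - 1) * uᶜ.card + (k - 1) * u.card := by omega
      _ = (k - 1) * (uᶜ.card + u.card) := by ring
      _ = (k - 1) * Fintype.card ι := by rw [h2]
  refine ⟨1 + b, u.card, by omega, hm, by omega, ?_⟩
  intro i hi
  have hxi := hl ⟨i, hi⟩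
  have hx0 := hl x0
  simp only at hxi hx0
  rw [hsum ⟨i, hi⟩] at hxi
  rw [hsum x0] at hx0
  have e1 : 1 + b + i * u.card = 1 + ((⟨i, hi⟩ : Fin k) : ℕ) * u.card + b := by
    simp only [Fin.val_mk]
    omega
  have e2 : (1 + b : ℕ) = 1 + ((x0 : ℕ) * u.card + b) := by
    have hz : (x0 : ℕ) * u.card = 0 := by rw [hx0val]; ring
    omega
  rw [show (1 : ℕ) + ((⟨i, hi⟩ : Fin k) : ℕ) * u.card + b
      = 1 + (((⟨i, hi⟩ : Fin k) : ℕ) * u.card + b) from by omega] at e1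
  rw [e1, hxi, e2, hx0]

/-- Every `n` for which all colorings contain a monochromatic AP satisfies the
lower bound. -/
lemma bound_of_mem {n k c : ℕ} (hk : 2 ≤ k) (hc : 2 ≤ c)
    (hmem : ∀ χ : ℕ → Fin c, hasMonoAP c k n χ) :
    (c : ℝ) ^ ((k : ℝ) - 3) * ((k : ℝ) - 1) / (k : ℝ) ^ 2 ≤ (n : ℝ) := by
  classical
  have hn1 : 1 ≤ n := by
    obtain ⟨a, d, h1, h2, h3, -⟩ := hmem (fun _ => ⟨0, by omega⟩)
    have : 1 * d ≤ (k - 1) * d := Nat.mul_le_mul_right _ (by omega)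
    omega
  have hkm : ((k - 1 : ℕ) : ℝ) = (k : ℝ) - 1 := by
    rw [Nat.cast_sub (by omega : 1 ≤ k)]; norm_num
  have hcpos : (0 : ℝ) < (c : ℝ) := by positivity
  set q : ℝ := ((c ^ (k - 1) : ℕ) : ℝ) with hqdef
  have hqalt : q = (c : ℝ) ^ (k - 1 : ℕ) := by rw [hqdef, Nat.cast_pow]
  have hrw : (c : ℝ) ^ ((k : ℝ) - 3) * ((k : ℝ) - 1) / (k : ℝ) ^ 2
      = q * ((k : ℝ) - 1) / ((c : ℝ) ^ 2 * (k : ℝ) ^ 2) := by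
    have hexp : (k : ℝ) - 3 = ((k - 1 : ℕ) : ℝ) - 2 := by rw [hkm]; ring
    have h2 : (c : ℝ) ^ ((2 : ℕ) : ℝ) = (c : ℝ) ^ (2 : ℕ) := Real.rpow_natCast _ 2
    rw [hexp, Real.rpow_sub hcpos, Real.rpow_natCast]
    rw [show ((2 : ℝ) = ((2 : ℕ) : ℝ)) from by norm_num, h2, ← hqalt]
    have hc2 : (c : ℝ) ^ (2 : ℕ) ≠ 0 := by positivity
    field_simp
  rw [hrw]
  have hK1 : (0 : ℝ) < (k : ℝ) - 1 := by
    have : (2 : ℝ) ≤ (k : ℝ) := by exact_mod_cast hk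
    linarith
  have hC2 : (4 : ℝ) ≤ (c : ℝ) ^ 2 := by
    have : (2 : ℝ) ≤ (c : ℝ) := by exact_mod_cast hc
    nlinarith
  by_cases hB : q * ((k : ℝ) - 1) / ((c : ℝ) ^ 2 * (k : ℝ) ^ 2) ≤ 1
  · calc q * ((k : ℝ) - 1) / ((c : ℝ) ^ 2 * (k : ℝ) ^ 2) ≤ 1 := hB
      _ ≤ (n : ℝ) := by exact_mod_cast hn1
  · push_neg at hB
    have hKpos : (0 : ℝ) < (k : ℝ) := by positivity
    have hK2 : (0 : ℝ) < (k : ℝ) ^ 2 := by positivity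
    have hCK : (0 : ℝ) < (c : ℝ) ^ 2 * (k : ℝ) ^ 2 := by positivity
    have hBmul : (c : ℝ) ^ 2 * (k : ℝ) ^ 2 < q * ((k : ℝ) - 1) := by
      have := (lt_div_iff₀ hCK).mp hB
      linarith
    have hk4 : 4 * ((k : ℝ) - 1) ≤ (k : ℝ) ^ 2 := by nlinarith [sq_nonneg ((k : ℝ) - 2)]
    have hq16 : (16 : ℝ) * ((k : ℝ) - 1) < q * ((k : ℝ) - 1) := by nlinarith
    have hq16' : (16 : ℝ) < q := by
      have := lt_of_mul_lt_mul_right hq16 hK1.le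
      linarith
    have hQ3 : 3 ≤ c ^ (k - 1) := by
      have h3r : (3 : ℝ) ≤ ((c ^ (k - 1) : ℕ) : ℝ) := by rw [← hqdef]; linarith
      exact_mod_cast h3r
    by_cases hcond : 4 * (k * (k * ((n - 1) / (k - 1)))) ≤ c ^ (k - 1)
    · exfalso
      obtain ⟨g, hg⟩ := exists_avoider (n := n) hk hc hQ3 hcond
      obtain ⟨a, d, h1, h2, h3, hmono⟩ :=
        hmem (fun m => if h : m - 1 < n then g ⟨m - 1, h⟩ else ⟨0, by omega⟩)
      have htAP : (a, d) ∈ APs n k := (mem_APs hk).mpr ⟨h1, h2, h3⟩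
      refine hg (a, d) htAP ?_
      intro j hj j' hj'
      obtain ⟨-, i, hik, hij⟩ := Finset.mem_filter.mp hj
      obtain ⟨-, i', hik', hij'⟩ := Finset.mem_filter.mp hj'
      simp only at hij hij'
      have key : ∀ (i₀ : ℕ), i₀ < k → ∀ (j₀ : Fin n), (j₀ : ℕ) + 1 = a + i₀ * d →
          g j₀ = (fun m => if h : m - 1 < n then g ⟨m - 1, h⟩ else ⟨0, by omega⟩) a := by
        intro i₀ hi₀ j₀ hj₀
        have hmono₀ := hmono i₀ hi₀
        have hlt : a + i₀ * d - 1 < n := by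
          have := j₀.isLt
          omega
        have heq : (⟨a + i₀ * d - 1, hlt⟩ : Fin n) = j₀ := by
          apply Fin.ext
          simp only
          omega
        rw [← hmono₀]
        simp only [dif_pos hlt]
        rw [heq]
      calc g j = (fun m => if h : m - 1 < n then g ⟨m - 1, h⟩ else ⟨0, by omega⟩) a :=
          key i hik j hij
        _ = g j' := (key i' hik' j' hij').symm
    · push_neg at hcond
      have hnm : ((n - 1 : ℕ) : ℝ) = (n : ℝ) - 1 := by
        rw [Nat.cast_sub hn1]; norm_num
      have hF : (((n - 1) / (k - 1) : ℕ) : ℝ) ≤ ((n : ℝ) - 1) / ((k : ℝ) - 1) := by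
        calc (((n - 1) / (k - 1) : ℕ) : ℝ) ≤ ((n - 1 : ℕ) : ℝ) / ((k - 1 : ℕ) : ℝ) :=
            Nat.cast_div_le
          _ = ((n : ℝ) - 1) / ((k : ℝ) - 1) := by rw [hnm, hkm]
      have hq1 : q < 4 * (k : ℝ) * (k : ℝ) * (((n - 1) / (k - 1) : ℕ) : ℝ) := by
        have hcast : ((c ^ (k - 1) : ℕ) : ℝ)
            < ((4 * (k * (k * ((n - 1) / (k - 1)))) : ℕ) : ℝ) := by
          exact_mod_cast hcond
        rw [hqdef]
        calc ((c ^ (k - 1) : ℕ) : ℝ)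
            < ((4 * (k * (k * ((n - 1) / (k - 1)))) : ℕ) : ℝ) := hcast
          _ = 4 * (k : ℝ) * (k : ℝ) * (((n - 1) / (k - 1) : ℕ) : ℝ) := by
            push_cast
            ring
      have hq2 : q < 4 * (k : ℝ) * (k : ℝ) * (((n : ℝ) - 1) / ((k : ℝ) - 1)) := by
        refine hq1.trans_le ?_
        have h4kk : (0 : ℝ) ≤ 4 * (k : ℝ) * (k : ℝ) := by positivity
        exact mul_le_mul_of_nonneg_left hF h4kk
      have hq3 : q * ((k : ℝ) - 1) < 4 * (k : ℝ) * (k : ℝ) * ((n : ℝ) - 1) := by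
        have hmul := mul_lt_mul_of_pos_right hq2 hK1
        calc q * ((k : ℝ) - 1)
            < 4 * (k : ℝ) * (k : ℝ) * (((n : ℝ) - 1) / ((k : ℝ) - 1)) * ((k : ℝ) - 1) :=
            hmul
          _ = 4 * (k : ℝ) * (k : ℝ) * ((n : ℝ) - 1) := by
            field_simp
      have hN1 : (1 : ℝ) ≤ (n : ℝ) := by exact_mod_cast hn1
      rw [div_le_iff₀ hCK]
      have hstep : 4 * (k : ℝ) * (k : ℝ) * ((n : ℝ) - 1)
          ≤ (n : ℝ) * ((c : ℝ) ^ 2 * (k : ℝ) ^ 2) := by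
        nlinarith [sq_nonneg (k : ℝ), hC2, hN1, hK2]
      linarith

end VdWAux

/-- Main theorem: w(k;c) ≥ c^(k-3)·(k-1)/k² for all k ≥ 2 and c ≥ 2. -/
theorem vdW_lower_bound (k c : ℕ) (hk : 2 ≤ k) (hc : 2 ≤ c) :
    (c : ℝ) ^ ((k : ℝ) - 3) * ((k : ℝ) - 1) / (k : ℝ) ^ 2 ≤ (vdW k c : ℝ) := by
  have hne : {n | ∀ χ : ℕ → Fin c, hasMonoAP c k n χ}.Nonempty :=
    VdWAux.exists_vdW_bound k c hk hc
  have hmem : vdW k c ∈ {n | ∀ χ : ℕ → Fin c, hasMonoAP c k n χ} := Nat.sInf_mem hne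
  exact VdWAux.bound_of_mem hk hc hmem
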